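/- Define the map φ(ρ) = (1/π)( sin(arccos ρ) + (π − arccos ρ)·ρ ) for ρ ∈ [0,1]. Then φ(1) = 1, and for all ρ ∈ [0,1), φ is strictly increasing, has derivative strictly less than 1, and satisfies φ(ρ) > ρ. -/

import Mathlib

open Real

/-- The ReLU correlation map of the infinite-width Gaussian process limit. -/
noncomputable def phi (ρ : ℝ) : ℝ :=
  (1 / π) * (Real.sin (Real.arccos ρ) + (π - Real.arccos ρ) * ρ)

lemma phi_hasDerivAt {x : ℝ} (h1 : -1 < x) (h2 : x < 1) :
    HasDerivAt phi ((π - Real.arccos x) / π) x := by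
  have hsq : (0:ℝ) < Real.sqrt (1 - x ^ 2) := by
    apply Real.sqrt_pos.mpr; nlinarith
  have ha := Real.hasDerivAt_arccos (by linarith : x ≠ -1) (by linarith : x ≠ 1)
  have hs : HasDerivAt (fun x => Real.sin (Real.arccos x))
      (Real.cos (Real.arccos x) * (-(1 / Real.sqrt (1 - x ^ 2)))) x :=
    (Real.hasDerivAt_sin _).comp x ha
  have hp : HasDerivAt (fun x : ℝ => (π - Real.arccos x) * x)
      ((0 - -(1 / Real.sqrt (1 - x ^ 2))) * x + (π - Real.arccos x) * 1) x :=
    ((hasDerivAt_const x π).sub ha).mul (hasDerivAt_id x)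
  have h := (hs.add hp).const_mul (1 / π)
  refine h.congr_deriv ?_
  rw [Real.cos_arccos (by linarith) (by linarith)]
  have hpi := Real.pi_pos
  field_simp
  ring

lemma phi_cont : Continuous phi := by
  unfold phi
  exact continuous_const.mul ((Real.continuous_sin.comp Real.continuous_arccos).add
    ((continuous_const.sub Real.continuous_arccos).mul continuous_id))

theorem stmt_16 :
    phi 1 = 1 ∧ StrictMonoOn phi (Set.Icc (0 : ℝ) 1) ∧
      ∀ ρ ∈ Set.Ico (0 : ℝ) 1,
        HasDerivAt phi ((π - Real.arccos ρ) / π) ρ ∧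
          (π - Real.arccos ρ) / π < 1 ∧ ρ < phi ρ := by
  have hpi := Real.pi_pos
  have h1 : phi 1 = 1 := by
    unfold phi
    rw [Real.arccos_one]
    simp
  refine ⟨h1, ?_, ?_⟩
  · apply strictMonoOn_of_deriv_pos (convex_Icc 0 1) (phi_cont.continuousOn)
    intro x hx
    rw [interior_Icc] at hx
    rw [(phi_hasDerivAt (by linarith [hx.1]) hx.2).deriv]
    have hlt : Real.arccos x < π := lt_of_lt_of_le
      (Real.arccos_lt_pi_div_two.mpr hx.1) (by linarith)
    exact div_pos (by linarith) hpi
  · intro ρ hρ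
    obtain ⟨hρ0, hρ1⟩ := hρ
    have hd := phi_hasDerivAt (by linarith) hρ1
    have harc : 0 < Real.arccos ρ := Real.arccos_pos.mpr hρ1
    refine ⟨hd, ?_, ?_⟩
    · rw [div_lt_one hpi]; linarith
    · -- g x = x - phi x is strictly increasing on [ρ, 1], g 1 = 0
      have hg : StrictMonoOn (fun x => x - phi x) (Set.Icc ρ 1) := by
        apply strictMonoOn_of_deriv_pos (convex_Icc ρ 1)
          ((continuous_id.sub phi_cont).continuousOn)
        intro x hx
        rw [interior_Icc] at hx
        have hx1 : -1 < x := by linarith [hx.1]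
        have hdx := (hasDerivAt_id x).sub (phi_hasDerivAt hx1 hx.2)
        rw [hdx.deriv]
        have harcx : 0 < Real.arccos x := Real.arccos_pos.mpr hx.2
        rw [show (1:ℝ) - (π - Real.arccos x) / π = Real.arccos x / π by
          field_simp; ring]
        positivity
      have := hg (Set.mem_Icc.mpr ⟨le_refl ρ, hρ1.le⟩)
        (Set.mem_Icc.mpr ⟨hρ1.le, le_refl 1⟩) hρ1
      simp only [h1] at this
      linarith
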